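/- P(X) ⊕ J(X) = Π: the span of the short polynomials and the ideal generated by the long polynomials form a direct sum decomposition of the polynomial ring. -/

import Mathlib

open MvPolynomial

attribute [local instance] Classical.propDecidable

noncomputable section

/-- The linear polynomial `t ↦ v ⬝ t` attached to a vector `v ∈ ℝⁿ`. -/
def lin (n : ℕ) (v : Fin n → ℝ) : MvPolynomial (Fin n) ℂ :=
  ∑ i, MvPolynomial.C (v i : ℂ) * MvPolynomial.X i

/-- `p_Y`, the product of the linear polynomials over an index set `Y`. -/
def pProd {n : ℕ} {ι : Type*} (x : ι → Fin n → ℝ) (Y : Finset ι) : MvPolynomial (Fin n) ℂ :=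
  ∏ i ∈ Y, lin n (x i)

/-- The differential operator `p(D)` (substitute `∂/∂tᵢ` for `tᵢ` in `p`). -/
def pDop {n : ℕ} (p : MvPolynomial (Fin n) ℂ) : Module.End ℂ (MvPolynomial (Fin n) ℂ) :=
  Finsupp.sum (AddMonoidAlgebra.coeff p) fun m c =>
    c • (((List.finRange n).map fun i =>
      ((MvPolynomial.pderiv i).toLinearMap : Module.End ℂ (MvPolynomial (Fin n) ℂ)) ^ m i).prod)

/-- The kernel of a polynomial ideal: all `q` with `p(D)q = 0` for every `p ∈ I`. -/
def dKer {n : ℕ} (I : Ideal (MvPolynomial (Fin n) ℂ)) : Submodule ℂ (MvPolynomial (Fin n) ℂ) :=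
  ⨅ p ∈ I, LinearMap.ker (pDop p)

/-- Standard inner product on `ℝⁿ`. -/
def dotp {n : ℕ} (u v : Fin n → ℝ) : ℝ := ∑ i, u i * v i

/-- `B` is a basis drawn from the multiset `x`. -/
def IsBasisSet {n : ℕ} {ι : Type*} (x : ι → Fin n → ℝ) (B : Finset ι) : Prop :=
  LinearIndependent ℝ (fun b : {i // i ∈ B} => x b.1) ∧ Submodule.span ℝ (x '' ↑B) = ⊤

/-- `I` is an independent subset of the multiset `x`. -/
def IsIndepSet {n : ℕ} {ι : Type*} (x : ι → Fin n → ℝ) (I : Finset ι) : Prop :=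
  LinearIndependent ℝ (fun b : {i // i ∈ I} => x b.1)

/-- `F` is a facet hyperplane of `X`. -/
def IsFacet {n : ℕ} {ι : Type*} (x : ι → Fin n → ℝ) (F : Submodule ℝ (Fin n → ℝ)) : Prop :=
  Module.finrank ℝ F = n - 1 ∧ ∃ Y : Finset ι, Submodule.span ℝ (x '' ↑Y) = F

/-- `η` is a (nonzero) normal to the subspace `F`. -/
def IsNormal {n : ℕ} (η : Fin n → ℝ) (F : Submodule ℝ (Fin n → ℝ)) : Prop :=
  η ≠ 0 ∧ ∀ v ∈ F, dotp η v = 0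

/-- `m(F)`: number of elements of `X` outside a subspace `F`. -/
def mult {n : ℕ} {ι : Type*} [Fintype ι] (x : ι → Fin n → ℝ) (F : Submodule ℝ (Fin n → ℝ)) : ℕ :=
  (Finset.univ.filter fun i => x i ∉ F).card

/-- The central ideal `I(X)`. -/
def centralIdeal {n : ℕ} {ι : Type*} [Fintype ι] (x : ι → Fin n → ℝ) :
    Ideal (MvPolynomial (Fin n) ℂ) :=
  Ideal.span {p | ∃ F η, IsFacet x F ∧ IsNormal η F ∧ p = lin n η ^ mult x F}

/-- The central `P`-space of the sub-multiset indexed by `A`. -/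
def centralPOn {n : ℕ} {ι : Type*} [Fintype ι] [DecidableEq ι] (x : ι → Fin n → ℝ)
    (A : Finset ι) : Submodule ℂ (MvPolynomial (Fin n) ℂ) :=
  Submodule.span ℂ
    {p | ∃ Y : Finset ι, Y ⊆ A ∧
      Module.finrank ℝ (Submodule.span ℝ (x '' ↑(A \ Y))) = n ∧ p = pProd x Y}

/-- `X(Y)` with respect to the order on indices. -/
def XofY {n N : ℕ} (x : Fin N → Fin n → ℝ) (Y : Finset (Fin N)) : Finset (Fin N) :=
  Finset.univ.filter fun i => i ∉ Y ∧ x i ∉ Submodule.span ℝ (x '' {j | j ∈ Y ∧ j < i})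

/-- the valuation `val(Y) = #X(Y)`. -/
def valu {n N : ℕ} (x : Fin N → Fin n → ℝ) (Y : Finset (Fin N)) : ℕ := (XofY x Y).card

/-- `Q_Y := p_{X(Y)}`. -/
def QB {n N : ℕ} (x : Fin N → Fin n → ℝ) (Y : Finset (Fin N)) : MvPolynomial (Fin n) ℂ :=
  pProd x (XofY x Y)

/-- A semi-external collection of independent sets. -/
def SemiExternal {n N : ℕ} (x : Fin N → Fin n → ℝ) (I' : Set (Finset (Fin N))) : Prop :=
  (∀ I ∈ I', IsIndepSet x I) ∧
  ∀ I ∈ I', ∀ J : Finset (Fin N), IsIndepSet x J →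
    Submodule.span ℝ (x '' ↑I) ≤ Submodule.span ℝ (x '' ↑J) → J ∈ I'

/-- `P₊(X, 𝕀')`. -/
def PplusOn {n N : ℕ} (x : Fin N → Fin n → ℝ) (I' : Set (Finset (Fin N))) :
    Submodule ℂ (MvPolynomial (Fin n) ℂ) :=
  Submodule.span ℂ {p | ∃ Y : Finset (Fin N), (∃ I ∈ I', Y ∩ I = ∅) ∧ p = pProd x Y}

/-- `Π⁰_j(S^⊥)`: homogeneous polynomials of degree `j` annihilated by directional
derivatives along `S`. -/
def homPerp (n j : ℕ) (S : Submodule ℝ (Fin n → ℝ)) : Set (MvPolynomial (Fin n) ℂ) :=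
  {p | p ∈ MvPolynomial.homogeneousSubmodule (Fin n) ℂ j ∧ ∀ η ∈ S, pDop (lin n η) p = 0}

/-- `Π⁰_j(W)`: homogeneous polynomials of degree `j` which are functions on `W`
(annihilated by derivatives along `W^⊥`). -/
def homOn (n j : ℕ) (W : Submodule ℝ (Fin n → ℝ)) : Set (MvPolynomial (Fin n) ℂ) :=
  {p | p ∈ MvPolynomial.homogeneousSubmodule (Fin n) ℂ j ∧
    ∀ η : Fin n → ℝ, (∀ w ∈ W, dotp η w = 0) → pDop (lin n η) p = 0}

/-- `S(X,𝕀')`: spans of independent sets outside `𝕀'`. -/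
def exSpans {n N : ℕ} (x : Fin N → Fin n → ℝ) (I' : Set (Finset (Fin N))) :
    Set (Submodule ℝ (Fin n → ℝ)) :=
  {S | ∃ I : Finset (Fin N), IsIndepSet x I ∧ I ∉ I' ∧ Submodule.span ℝ (x '' ↑I) = S}

/-- The external ideal `I₊(X)`. -/
def IplusIdeal {n : ℕ} {ι : Type*} [Fintype ι] (x : ι → Fin n → ℝ) :
    Ideal (MvPolynomial (Fin n) ℂ) :=
  Ideal.span {p | ∃ F η, IsFacet x F ∧ IsNormal η F ∧ p = lin n η ^ (mult x F + 1)}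

/-- The semi-external ideal `I₊(X,𝕀')`. -/
def IplusOn {n N : ℕ} (x : Fin N → Fin n → ℝ) (I' : Set (Finset (Fin N))) :
    Ideal (MvPolynomial (Fin n) ℂ) :=
  IplusIdeal x ⊔ Ideal.span {p | ∃ S ∈ exSpans x I', p ∈ homPerp n (mult x S) S}

/-- `expPart V c j`: the degree-`j` homogeneous part of `∑_{v ∈ V} c_v e_v`. -/
def expPart (n : ℕ) (V : Finset (Fin n → ℝ)) (c : (Fin n → ℝ) → ℂ) (j : ℕ) :
    MvPolynomial (Fin n) ℂ :=
  ((j.factorial : ℂ))⁻¹ • ∑ v ∈ V, c v • (lin n v) ^ j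

/-- The least space `Π(V)` of a finite point set `V`. -/
def leastSpace (n : ℕ) (V : Finset (Fin n → ℝ)) : Submodule ℂ (MvPolynomial (Fin n) ℂ) :=
  Submodule.span ℂ
    {p | ∃ (c : (Fin n → ℝ) → ℂ) (j₀ : ℕ),
      p = expPart n V c j₀ ∧ p ≠ 0 ∧ ∀ j < j₀, expPart n V c j = 0}

/-- Simplicity of the arrangement `H(X,λ)`. -/
def SimpleArrangement {n N : ℕ} (x : Fin N → Fin n → ℝ) (lam : Fin N → ℝ) : Prop :=
  ∀ Y : Finset (Fin N), (∃ t : Fin n → ℝ, ∀ i ∈ Y, dotp (x i) t = lam i) →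
    LinearIndependent ℝ (fun i : {i // i ∈ Y} => x i.1)

/-- `b` is `I`-internally active in `B`. -/
def IActive {n N : ℕ} (x : Fin N → Fin n → ℝ) (Iset B : Finset (Fin N)) (b : Fin N) : Prop :=
  b ∈ B ∧ b ∈ Iset ∧ ∀ j, x j ∉ Submodule.span ℝ (x '' ↑(B.erase b)) → j ≤ b

/-- `B` is an `I`-internal basis. -/
def IInternal {n N : ℕ} (x : Fin N → Fin n → ℝ) (Iset B : Finset (Fin N)) : Prop :=
  IsBasisSet x B ∧ ∀ b, ¬ IActive x Iset B b

/-- The semi-internal space `P₋(X,I)`. -/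
def Pminus {n N : ℕ} (x : Fin N → Fin n → ℝ) (Iset : Finset (Fin N)) :
    Submodule ℂ (MvPolynomial (Fin n) ℂ) :=
  ⨅ b ∈ Iset, centralPOn x (Finset.univ.erase b)

/-- The semi-internal ideal `I₋(X,I)`. -/
def IminusOn {n N : ℕ} (x : Fin N → Fin n → ℝ) (Iset : Finset (Fin N)) :
    Ideal (MvPolynomial (Fin n) ℂ) :=
  centralIdeal x ⊔
    Ideal.span {p | ∃ F η, IsFacet x F ∧ IsNormal η F ∧ ¬ (x '' ↑Iset ⊆ ↑F) ∧
      p = lin n η ^ (mult x F - 1)}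

/-- The semi-internal ideal `J₋(X,I)` of `I`-long polynomials. -/
def JminusOn {n N : ℕ} (x : Fin N → Fin n → ℝ) (Iset : Finset (Fin N)) :
    Ideal (MvPolynomial (Fin n) ℂ) :=
  Ideal.span {p | ∃ Y : Finset (Fin N),
    (∀ B, IInternal x Iset B → (Y ∩ B).Nonempty) ∧ p = pProd x Y}

/-- Greedy completion `ex(I)` of an independent set by the auxiliary ordered basis `b0`. -/
def exComp {n N : ℕ} (x : Fin N → Fin n → ℝ) (b0 : Fin n → Fin n → ℝ) (I : Finset (Fin N)) :
    Finset (Fin N ⊕ Fin n) :=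
  I.image Sum.inl ∪
    (Finset.univ.filter fun k : Fin n =>
      b0 k ∉ Submodule.span ℝ (x '' ↑I ∪ b0 '' {j | j < k})).image Sum.inr

section ZPA
variable {n N : ℕ} (x : Fin N → Fin n → ℝ)

lemma lin_apply_add (v w : Fin n → ℝ) : lin n (v + w) = lin n v + lin n w := by
  simp [lin, Finset.sum_add_distrib, add_mul, Pi.add_apply, Complex.ofReal_add, map_add]

lemma real_smul_poly (a : ℝ) (p : MvPolynomial (Fin n) ℂ) :
    a • p = (a : ℂ) • p := by
  rw [← Complex.coe_algebraMap, algebraMap_smul]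

lemma lin_apply_smul (a : ℝ) (v : Fin n → ℝ) : lin n (a • v) = (a : ℂ) • lin n v := by
  simp only [lin, Finset.smul_sum, Pi.smul_apply, smul_eq_mul, Complex.ofReal_mul, map_mul,
    Algebra.smul_def, MvPolynomial.algebraMap_eq, Finset.mul_sum, mul_assoc]

/-- `lin` as an `ℝ`-linear map. -/
def linMap (n : ℕ) : (Fin n → ℝ) →ₗ[ℝ] MvPolynomial (Fin n) ℂ where
  toFun v := lin n v
  map_add' := lin_apply_add
  map_smul' a v := by
    show lin n (a • v) = a • lin n v
    rw [lin_apply_smul, real_smul_poly]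

lemma lin_single (i : Fin n) : lin n (Pi.single i 1) = MvPolynomial.X i := by
  rw [lin, Finset.sum_eq_single i]
  · simp
  · intro j _ hj
    rw [Pi.single_eq_of_ne hj]; simp
  · simp

lemma pProd_empty : pProd x (∅ : Finset (Fin N)) = 1 := by simp [pProd]

lemma pProd_insert {Y : Finset (Fin N)} {i : Fin N} (hi : i ∉ Y) :
    pProd x (insert i Y) = lin n (x i) * pProd x Y := by
  rw [pProd, Finset.prod_insert hi]; rfl

/-- "Y is short": complement spans. -/
def ShortS (Y : Finset (Fin N)) : Prop :=
  Module.finrank ℝ (Submodule.span ℝ (x '' ↑((Finset.univ : Finset (Fin N)) \ Y))) = n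

lemma short_iff_top (Y : Finset (Fin N)) :
    ShortS x Y ↔ Submodule.span ℝ (x '' ↑((Finset.univ : Finset (Fin N)) \ Y)) = ⊤ := by
  constructor
  · intro h
    apply Submodule.eq_top_of_finrank_eq
    rw [h, Module.finrank_pi, Fintype.card_fin]
  · intro h
    rw [ShortS, h, finrank_top, Module.finrank_pi, Fintype.card_fin]

/-- The set of generators of the long ideal. -/
def JsetS : Set (MvPolynomial (Fin n) ℂ) :=
  {p | ∃ Y : Finset (Fin N),
    Module.finrank ℝ (Submodule.span ℝ (x '' ↑((Finset.univ : Finset (Fin N)) \ Y))) ≠ n ∧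
    p = pProd x Y}

/-- `P + J` as a ℂ-submodule. -/
def MM : Submodule ℂ (MvPolynomial (Fin n) ℂ) :=
  centralPOn x (Finset.univ : Finset (Fin N)) ⊔ (Ideal.span (JsetS x)).restrictScalars ℂ

lemma pProd_mem_MM (Y : Finset (Fin N)) : pProd x Y ∈ MM x := by
  by_cases h : ShortS x Y
  · apply Submodule.mem_sup_left
    apply Submodule.subset_span
    exact ⟨Y, Finset.subset_univ _, h, rfl⟩
  · apply Submodule.mem_sup_right
    exact Submodule.subset_span ⟨Y, h, rfl⟩

lemma mul_pProd_mem_MM (hx : Submodule.span ℝ (Set.range x) = ⊤)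
    (Y : Finset (Fin N)) (hY : ShortS x Y) (v : Fin n → ℝ) :
    lin n v * pProd x Y ∈ MM x := by
  classical
  -- the ℝ-linear map v ↦ lin v * p_Y
  let L : (Fin n → ℝ) →ₗ[ℝ] MvPolynomial (Fin n) ℂ :=
    (LinearMap.mulRight ℝ (pProd x Y)).comp (linMap n)
  have hsub : Submodule.span ℝ (x '' ↑((Finset.univ : Finset (Fin N)) \ Y)) ≤
      Submodule.comap L ((MM x).restrictScalars ℝ) := by
    rw [Submodule.span_le]
    rintro _ ⟨i, hi, rfl⟩
    simp only [Finset.coe_sdiff, Finset.coe_univ, Set.mem_diff, Set.mem_univ, true_and] at hi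
    have hiY : i ∉ Y := by simpa using hi
    simp only [Submodule.mem_comap, L, LinearMap.comp_apply, LinearMap.mulRight_apply]
    show lin n (x i) * pProd x Y ∈ MM x
    rw [← pProd_insert x hiY]
    exact pProd_mem_MM x _
  have hv : v ∈ Submodule.span ℝ (x '' ↑((Finset.univ : Finset (Fin N)) \ Y)) := by
    rw [(short_iff_top x Y).mp hY]; trivial
  exact hsub hv

lemma mul_mem_MM (hx : Submodule.span ℝ (Set.range x) = ⊤)
    (v : Fin n → ℝ) (q : MvPolynomial (Fin n) ℂ) (hq : q ∈ MM x) :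
    lin n v * q ∈ MM x := by
  rcases Submodule.mem_sup.mp hq with ⟨p, hp, j, hj, rfl⟩
  rw [mul_add]
  apply Submodule.add_mem
  · -- p in P
    refine Submodule.span_induction ?_ ?_ ?_ ?_ hp
    · rintro _ ⟨Y, -, hY, rfl⟩
      exact mul_pProd_mem_MM x hx Y hY v
    · simp [MM]
    · intro a b _ _ ha hb
      rw [mul_add]; exact Submodule.add_mem _ ha hb
    · intro c a _ ha
      rw [mul_smul_comm]; exact Submodule.smul_mem _ _ ha
  · apply Submodule.mem_sup_right
    exact Ideal.mul_mem_left _ _ hj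

lemma codisjoint_MM (hx : Submodule.span ℝ (Set.range x) = ⊤) : MM x = ⊤ := by
  rw [eq_top_iff]
  suffices h : ∀ p : MvPolynomial (Fin n) ℂ, p ∈ MM x by
    intro p _; exact h p
  intro p
  have hone : (1 : MvPolynomial (Fin n) ℂ) ∈ MM x := by
    rw [← pProd_empty x]
    exact pProd_mem_MM x ∅
  induction p using MvPolynomial.induction_on with
  | C a =>
      have := Submodule.smul_mem (MM x) a hone
      simpa [MvPolynomial.C_eq_smul_one] using this
  | add p q hp hq => exact Submodule.add_mem _ hp hq
  | mul_X p i hp =>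
      have := mul_mem_MM x hx (Pi.single i 1) p hp
      rw [lin_single] at this
      rw [mul_comm] at this
      exact this

end ZPA
section ZPB
variable {n N : ℕ} (x : Fin N → Fin n → ℝ)

/-- vectors not in the span of strictly earlier ones are independent -/
lemma indep_of_not_mem_span_earlier (B : Finset (Fin N))
    (h : ∀ b ∈ B, x b ∉ Submodule.span ℝ (x '' {j | j ∈ B ∧ j < b})) :
    LinearIndependent ℝ (fun b : {i // i ∈ B} => x b.1) := by
  classical
  have : LinearIndependent (ι := ↑(↑B : Set (Fin N))) ℝ (x ∘ Subtype.val) := by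
    rw [linearIndependent_comp_subtype_iff, linearIndepOn_iff]
    intro l hl hsum
    by_contra hne
    have hsupp : l.support.Nonempty := Finsupp.support_nonempty_iff.mpr hne
    set i₀ := l.support.max' hsupp with hi₀
    have hi₀mem : i₀ ∈ l.support := l.support.max'_mem hsupp
    have hi₀B : i₀ ∈ B := by
      have := hl hi₀mem
      simpa using this
    have hl₀ : l i₀ ≠ 0 := Finsupp.mem_support_iff.mp hi₀mem
    -- x i₀ in span of earlier elements of B
    apply h i₀ hi₀B
    have hsum' : ∑ j ∈ l.support, l j • x j = 0 := by
      rw [Finsupp.linearCombination_apply, Finsupp.sum] at hsum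
      exact hsum
    have hx0 : l i₀ • x i₀ = - ∑ j ∈ l.support.erase i₀, l j • x j := by
      apply eq_neg_of_add_eq_zero_left
      rw [add_comm, Finset.sum_erase_add _ (fun j => l j • x j) hi₀mem]
      exact hsum'
    have : x i₀ = (l i₀)⁻¹ • (- ∑ j ∈ l.support.erase i₀, l j • x j) := by
      rw [← hx0, smul_smul, inv_mul_cancel₀ hl₀, one_smul]
    rw [this]
    apply Submodule.smul_mem
    apply Submodule.neg_mem
    apply Submodule.sum_mem
    intro j hj
    apply Submodule.smul_mem
    apply Submodule.subset_span
    refine ⟨j, ⟨?_, ?_⟩, rfl⟩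
    · have := hl (Finset.mem_of_mem_erase hj); simpa using this
    · have hle : j ≤ i₀ := Finset.le_max' _ _ (Finset.mem_of_mem_erase hj)
      exact lt_of_le_of_ne hle (Finset.ne_of_mem_erase hj)
  exact this

/-- greedy basis of the complement of `Y` -/
def greedyB (Y : Finset (Fin N)) : Finset (Fin N) :=
  Finset.univ.filter fun i => i ∉ Y ∧
    x i ∉ Submodule.span ℝ (x '' {j | j ∉ Y ∧ j < i})

lemma greedyB_disj (Y : Finset (Fin N)) (i : Fin N) (hi : i ∈ greedyB x Y) : i ∉ Y := by
  simp only [greedyB, Finset.mem_filter] at hi; exact hi.2.1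

lemma greedyB_span_le (Y : Finset (Fin N)) :
    ∀ k : ℕ, Submodule.span ℝ (x '' {j | j ∉ Y ∧ (j : ℕ) < k}) ≤
      Submodule.span ℝ (x '' {b | b ∈ greedyB x Y ∧ (b : ℕ) < k}) := by
  intro k
  induction k using Nat.strong_induction_on with
  | _ k IH =>
    rw [Submodule.span_le]
    rintro _ ⟨j, ⟨hjY, hjk⟩, rfl⟩
    by_cases hjB : j ∈ greedyB x Y
    · exact Submodule.subset_span ⟨j, ⟨hjB, hjk⟩, rfl⟩
    · have : x j ∈ Submodule.span ℝ (x '' {l | l ∉ Y ∧ l < j}) := by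
        simp only [greedyB, Finset.mem_filter, Finset.mem_univ, true_and, not_and, not_not] at hjB
        exact hjB hjY
      have h1 : Submodule.span ℝ (x '' {l | l ∉ Y ∧ l < j}) ≤
          Submodule.span ℝ (x '' {b | b ∈ greedyB x Y ∧ (b : ℕ) < (j : ℕ)}) := by
        exact IH _ hjk
      have h2 : Submodule.span ℝ (x '' {b | b ∈ greedyB x Y ∧ (b : ℕ) < (j : ℕ)}) ≤
          Submodule.span ℝ (x '' {b | b ∈ greedyB x Y ∧ (b : ℕ) < k}) := by
        apply Submodule.span_mono
        apply Set.image_mono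
        intro b hb
        exact ⟨hb.1, lt_trans hb.2 hjk⟩
      exact h2 (h1 this)

lemma greedyB_spans (Y : Finset (Fin N)) (hY : ShortS x Y) :
    Submodule.span ℝ (x '' ↑(greedyB x Y)) = ⊤ := by
  rw [eq_top_iff]
  rw [← (short_iff_top x Y).mp hY]
  have h1 : (↑((Finset.univ : Finset (Fin N)) \ Y) : Set (Fin N)) =
      {j : Fin N | j ∉ Y ∧ (j : ℕ) < N} := by
    ext j; simp [j.isLt]
  rw [h1]
  refine le_trans (greedyB_span_le x Y N) ?_
  apply Submodule.span_mono
  apply Set.image_mono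
  intro b hb
  exact hb.1

lemma greedyB_indep (Y : Finset (Fin N)) :
    LinearIndependent ℝ (fun b : {i // i ∈ greedyB x Y} => x b.1) := by
  apply indep_of_not_mem_span_earlier
  intro b hb
  have hbdef := hb
  simp only [greedyB, Finset.mem_filter, Finset.mem_univ, true_and] at hbdef
  intro hmem
  apply hbdef.2
  have hle : Submodule.span ℝ (x '' {j | j ∈ greedyB x Y ∧ j < b}) ≤
      Submodule.span ℝ (x '' {j | j ∉ Y ∧ j < b}) := by
    apply Submodule.span_mono
    apply Set.image_mono
    intro j hj
    exact ⟨greedyB_disj x Y j hj.1, hj.2⟩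
  exact hle hmem

lemma greedyB_basis (Y : Finset (Fin N)) (hY : ShortS x Y) :
    IsBasisSet x (greedyB x Y) :=
  ⟨greedyB_indep x Y, greedyB_spans x Y hY⟩

lemma XofY_greedy_subset (Y : Finset (Fin N)) (i : Fin N)
    (hi : i ∈ XofY x (greedyB x Y)) : i ∈ Y := by
  by_contra hiY
  simp only [XofY, Finset.mem_filter, Finset.mem_univ, true_and] at hi
  obtain ⟨hiB, hspan⟩ := hi
  apply hspan
  have hx : x i ∈ Submodule.span ℝ (x '' {j | j ∉ Y ∧ j < i}) := by
    simp only [greedyB, Finset.mem_filter, Finset.mem_univ, true_and, not_and, not_not] at hiB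
    exact hiB hiY
  have h1 : Submodule.span ℝ (x '' {j | j ∉ Y ∧ j < i}) ≤
      Submodule.span ℝ (x '' {j | j ∈ greedyB x Y ∧ j < i}) := by
    exact greedyB_span_le x Y i
  exact h1 hx

/-- span of the Q_B family -/
def VB : Submodule ℂ (MvPolynomial (Fin n) ℂ) :=
  Submodule.span ℂ {p | ∃ B : Finset (Fin N), IsBasisSet x B ∧ p = pProd x (XofY x B)}

lemma short_pProd_mem_VB : ∀ (m : ℕ) (Y : Finset (Fin N)), (∑ i ∈ Y, (i : ℕ)) = m →
    ShortS x Y → pProd x Y ∈ VB x := by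
  intro m
  induction m using Nat.strong_induction_on with
  | _ m IH =>
    intro Y hm hY
    classical
    set B := greedyB x Y with hB
    by_cases hgood : Y = XofY x B
    · apply Submodule.subset_span
      exact ⟨B, greedyB_basis x Y hY, by rw [← hgood]⟩
    · -- pick i ∈ Y \ XofY x B
      have hsub : XofY x B ⊆ Y := fun i hi => XofY_greedy_subset x Y i hi
      have : ∃ i, i ∈ Y ∧ i ∉ XofY x B := by
        by_contra hcon
        push_neg at hcon
        exact hgood (Finset.Subset.antisymm hcon hsub)
      obtain ⟨i, hiY, hiX⟩ := this
      have hiB : i ∉ B := fun h => greedyB_disj x Y i h hiY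
      have hxi : x i ∈ Submodule.span ℝ (x '' ↑(B.filter (· < i))) := by
        simp only [XofY, Finset.mem_filter, Finset.mem_univ, true_and, not_and, not_not] at hiX
        have := hiX hiB
        have e : x '' {j | j ∈ B ∧ j < i} = x '' ↑(B.filter (· < i)) := by
          congr 1; ext j; simp
        rwa [e] at this
      -- coefficients
      have himg : x '' ↑(B.filter (· < i)) =
          Set.range (fun b : {b // b ∈ B.filter (· < i)} => x b.1) := by
        ext v
        constructor
        · rintro ⟨j, hj, rfl⟩
          exact ⟨⟨j, hj⟩, rfl⟩
        · rintro ⟨⟨j, hj⟩, rfl⟩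
          exact ⟨j, hj, rfl⟩
      rw [himg] at hxi
      rw [Submodule.mem_span_range_iff_exists_fun] at hxi
      rename' hxi => hxi'
      obtain ⟨c, hc⟩ := hxi'
      -- p_Y = Σ c_b • p_{insert b (Y.erase i)}
      have hYi : Y = insert i (Y.erase i) := (Finset.insert_erase hiY).symm
      have hpY : pProd x Y = lin n (x i) * pProd x (Y.erase i) := by
        conv_lhs => rw [hYi]
        exact pProd_insert x (Finset.notMem_erase i Y)
      have hlin : lin n (x i) = ∑ b : {b // b ∈ B.filter (· < i)}, (c b : ℂ) • lin n (x b.1) := by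
        have := congrArg (linMap n) hc
        rw [map_sum] at this
        simp only [map_smul] at this
        calc lin n (x i) = linMap n (x i) := rfl
          _ = ∑ b : {b // b ∈ B.filter (· < i)}, c b • linMap n (x b.1) := this.symm
          _ = _ := by
            apply Finset.sum_congr rfl
            intro b _
            rw [real_smul_poly]
            rfl
      rw [hpY, hlin, Finset.sum_mul]
      apply Submodule.sum_mem
      rintro ⟨b, hb⟩ -
      have hbmem := hb
      simp only [Finset.mem_filter] at hbmem
      obtain ⟨hbB, hbi⟩ := hbmem
      have hbY : b ∉ Y.erase i := fun h =>
        greedyB_disj x Y b hbB (Finset.mem_of_mem_erase h)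
      rw [smul_mul_assoc, ← pProd_insert x hbY]
      by_cases hcb : c ⟨b, hb⟩ = 0
      · rw [hcb]; simp
      · apply Submodule.smul_mem
        -- shortness of Y' = insert b (Y.erase i)
        set Y' := insert b (Y.erase i) with hY'
        have hiY' : i ∉ Y' := by
          simp only [hY', Finset.mem_insert]
          push_neg
          exact ⟨(ne_of_lt hbi).symm, Finset.notMem_erase i Y⟩
        have hB_le : Submodule.span ℝ (x '' ↑B) ≤
            Submodule.span ℝ (x '' ↑((Finset.univ : Finset (Fin N)) \ Y')) := by
          rw [Submodule.span_le]
          rintro _ ⟨b'', hb'', rfl⟩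
          simp only [Finset.mem_coe] at hb''
          have hxmem : ∀ j : Fin N, j ∉ Y' → x j ∈
              Submodule.span ℝ (x '' ↑((Finset.univ : Finset (Fin N)) \ Y')) := by
            intro j hj
            apply Submodule.subset_span
            exact ⟨j, by simp [hj], rfl⟩
          by_cases hbb : b'' = b
          · -- x b = (c b)⁻¹ • (x i - Σ_{b'≠b} c b' • x b')
            subst hbb
            have hximem : x i ∈
                Submodule.span ℝ (x '' ↑((Finset.univ : Finset (Fin N)) \ Y')) :=
              hxmem i hiY'
            have hsplit : x i = c ⟨b'', hb⟩ • x b'' +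
                ∑ b' ∈ Finset.univ.erase ⟨b'', hb⟩, c b' • x b'.1 := by
              rw [← hc, ← Finset.add_sum_erase _ _ (Finset.mem_univ ⟨b'', hb⟩)]
            have : x b'' = (c ⟨b'', hb⟩)⁻¹ •
                (x i - ∑ b' ∈ Finset.univ.erase ⟨b'', hb⟩, c b' • x b'.1) := by
              rw [hsplit]
              rw [add_sub_cancel_right, smul_smul, inv_mul_cancel₀ hcb, one_smul]
            rw [this]
            apply Submodule.smul_mem
            apply Submodule.sub_mem _ hximem
            apply Submodule.sum_mem
            rintro ⟨b', hb'⟩ hb'ne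
            apply Submodule.smul_mem
            simp only [Finset.mem_filter] at hb'
            have hb'b : b' ≠ b'' := by
              intro h
              apply Finset.ne_of_mem_erase hb'ne
              exact Subtype.ext h
            apply hxmem
            simp only [hY', Finset.mem_insert]
            push_neg
            exact ⟨hb'b, fun h => greedyB_disj x Y b' hb'.1 (Finset.mem_of_mem_erase h)⟩
          · apply hxmem
            simp only [hY', Finset.mem_insert]
            push_neg
            refine ⟨hbb, fun h => greedyB_disj x Y b'' hb'' (Finset.mem_of_mem_erase h)⟩
        have hY'short : ShortS x Y' := by
          rw [short_iff_top, eq_top_iff]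
          rw [← greedyB_spans x Y hY]
          exact hB_le
        -- measure decreases
        have hmeas : (∑ j ∈ Y', (j : ℕ)) < m := by
          have h1 : (∑ j ∈ Y', (j : ℕ)) = (b : ℕ) + ∑ j ∈ Y.erase i, (j : ℕ) := by
            rw [hY', Finset.sum_insert hbY]
          have h2 : m = (i : ℕ) + ∑ j ∈ Y.erase i, (j : ℕ) := by
            rw [← hm, Finset.add_sum_erase _ _ hiY]
          rw [h1, h2]
          exact Nat.add_lt_add_right hbi _
        exact IH _ hmeas Y' rfl hY'short

lemma centralPOn_le_VB : centralPOn x (Finset.univ : Finset (Fin N)) ≤ VB x := by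
  rw [centralPOn, Submodule.span_le]
  rintro _ ⟨Y, -, hY, rfl⟩
  exact short_pProd_mem_VB x _ Y rfl hY

end ZPB
section ZPD
variable {n N : ℕ} (x : Fin N → Fin n → ℝ)

lemma lin_homog (v : Fin n → ℝ) : (lin n v).IsHomogeneous 1 := by
  apply MvPolynomial.IsHomogeneous.sum
  intro i _
  exact MvPolynomial.isHomogeneous_C_mul_X _ _

lemma pProd_homog (Y : Finset (Fin N)) : (pProd x Y).IsHomogeneous Y.card := by
  have := MvPolynomial.IsHomogeneous.prod Y (fun i => lin n (x i)) (fun _ => 1)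
    (fun i _ => lin_homog (x i))
  simpa [pProd] using this

lemma pProd_deg (Y : Finset (Fin N)) : (pProd x Y).totalDegree ≤ Y.card :=
  (pProd_homog x Y).totalDegree_le

lemma lin_deg (v : Fin n → ℝ) : (lin n v).totalDegree ≤ 1 :=
  (lin_homog v).totalDegree_le

/-- `comp_j (c * g) = comp_{j-b} c * g` for `g` homogeneous of degree `b ≤ j`, else `0`. -/
lemma comp_homog_mul (c g : MvPolynomial (Fin n) ℂ) (b j : ℕ) (hg : g.IsHomogeneous b) :
    MvPolynomial.homogeneousComponent j (c * g) =
      if b ≤ j then MvPolynomial.homogeneousComponent (j - b) c * g else 0 := by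
  classical
  conv_lhs => rw [← MvPolynomial.sum_homogeneousComponent c, Finset.sum_mul, map_sum]
  have hterm : ∀ a, MvPolynomial.homogeneousComponent j
      (MvPolynomial.homogeneousComponent a c * g) =
      if j = a + b then MvPolynomial.homogeneousComponent a c * g else 0 := by
    intro a
    apply MvPolynomial.homogeneousComponent_of_mem
    rw [MvPolynomial.mem_homogeneousSubmodule]
    exact (MvPolynomial.homogeneousComponent_isHomogeneous a c).mul hg
  simp only [hterm]
  by_cases hbj : b ≤ j
  · have hiff : ∀ a, (j = a + b) ↔ (a = j - b) := by omega
    simp only [hiff]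
    rw [if_pos hbj]
    by_cases hmem : j - b ∈ Finset.range (c.totalDegree + 1)
    · rw [Finset.sum_ite_eq' _ _ (fun a => MvPolynomial.homogeneousComponent a c * g)]
      rw [if_pos hmem]
    · rw [Finset.sum_ite_eq' _ _ (fun a => MvPolynomial.homogeneousComponent a c * g)]
      rw [if_neg hmem]
      have : MvPolynomial.homogeneousComponent (j - b) c = 0 := by
        apply MvPolynomial.homogeneousComponent_eq_zero
        simp only [Finset.mem_range, not_lt] at hmem
        omega
      rw [this, zero_mul]
  · rw [if_neg hbj]
    apply Finset.sum_eq_zero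
    intro a _
    rw [if_neg (by omega)]

/-- mirrored version: `h` homogeneous of degree `a`, `deg g ≤ b`. -/
lemma comp_mul_left_homog (h g : MvPolynomial (Fin n) ℂ) (a b : ℕ)
    (hh : h.IsHomogeneous a) (hg : g.totalDegree ≤ b) :
    MvPolynomial.homogeneousComponent (a + b) (h * g) =
      h * MvPolynomial.homogeneousComponent b g := by
  rw [mul_comm, comp_homog_mul g h a (a + b) hh, if_pos (Nat.le_add_right a b)]
  rw [Nat.add_sub_cancel_left, mul_comm]

lemma comp_pProd (Y : Finset (Fin N)) (j : ℕ) :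
    MvPolynomial.homogeneousComponent j (pProd x Y) =
      if j = Y.card then pProd x Y else 0 :=
  MvPolynomial.homogeneousComponent_of_mem
    ((MvPolynomial.mem_homogeneousSubmodule _ _).mpr (pProd_homog x Y))

end ZPD
section ZPC
variable {n N : ℕ} (x : Fin N → Fin n → ℝ)

lemma dotp_comm (u v : Fin n → ℝ) : dotp u v = dotp v u := by
  simp [dotp, mul_comm]

lemma dotp_self_eq_zero {v : Fin n → ℝ} (h : dotp v v = 0) : v = 0 := by
  have h2 : ∀ i ∈ Finset.univ, v i * v i = 0 := by
    rw [dotp] at h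
    intro i hi
    have := (Finset.sum_eq_zero_iff_of_nonneg (fun j _ => mul_self_nonneg (v j))).mp h
    exact this i hi
  funext i
  exact mul_self_eq_zero.mp (h2 i (Finset.mem_univ i))

/-- dotp as a linear map in the second argument -/
def dotL (v : Fin n → ℝ) : (Fin n → ℝ) →ₗ[ℝ] ℝ where
  toFun w := dotp v w
  map_add' a b := by simp [dotp, mul_add, Finset.sum_add_distrib]
  map_smul' c a := by
    simp only [dotp, Pi.smul_apply, smul_eq_mul, RingHom.id_apply, Finset.mul_sum]
    exact Finset.sum_congr rfl fun i _ => by ring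

/-- the map `v ↦ (x b ⬝ v)_{b ∈ B}` -/
def TBmap (B : Finset (Fin N)) : (Fin n → ℝ) →ₗ[ℝ] ({i // i ∈ B} → ℝ) :=
  LinearMap.pi fun b => dotL (x b.1)

lemma image_coe_eq_range (B : Finset (Fin N)) :
    x '' ↑B = Set.range (fun b : {i // i ∈ B} => x b.1) := by
  ext v
  constructor
  · rintro ⟨j, hj, rfl⟩; exact ⟨⟨j, hj⟩, rfl⟩
  · rintro ⟨⟨j, hj⟩, rfl⟩; exact ⟨j, hj, rfl⟩

lemma card_of_basis {B : Finset (Fin N)} (hB : IsBasisSet x B) : B.card = n := by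
  have hspan : ⊤ ≤ Submodule.span ℝ (Set.range (fun b : {i // i ∈ B} => x b.1)) := by
    rw [← image_coe_eq_range, hB.2]
  let bas : Module.Basis {i // i ∈ B} ℝ (Fin n → ℝ) := Module.Basis.mk hB.1 hspan
  have := Module.finrank_eq_card_basis bas
  rw [Module.finrank_pi, Fintype.card_fin, Fintype.card_coe] at this
  exact this.symm

lemma TBmap_inj {B : Finset (Fin N)} (hB : IsBasisSet x B) :
    Function.Injective (TBmap x B) := by
  rw [← LinearMap.ker_eq_bot, eq_bot_iff]
  intro v hv
  simp only [LinearMap.mem_ker] at hv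
  have hall : ∀ b : {i // i ∈ B}, dotp (x b.1) v = 0 := by
    intro b
    have := congrFun hv b
    exact this
  have hspan : ∀ u ∈ Submodule.span ℝ (x '' ↑B), dotp u v = 0 := by
    intro u hu
    have hker : Submodule.span ℝ (x '' ↑B) ≤ LinearMap.ker (dotL v) := by
      rw [Submodule.span_le]
      rintro _ ⟨j, hj, rfl⟩
      simp only [SetLike.mem_coe, LinearMap.mem_ker]
      show dotp v (x j) = 0
      rw [dotp_comm]
      exact hall ⟨j, hj⟩
    have := hker hu
    simp only [LinearMap.mem_ker] at this
    rw [dotp_comm]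
    exact this
  have : dotp v v = 0 := hspan v (by rw [hB.2]; trivial)
  have := dotp_self_eq_zero this
  simp [this, Submodule.mem_bot]

/-- the inverse linear equivalence for a basis set -/
def TBequiv {B : Finset (Fin N)} (hB : IsBasisSet x B) :
    (Fin n → ℝ) ≃ₗ[ℝ] ({i // i ∈ B} → ℝ) :=
  LinearMap.linearEquivOfInjective (TBmap x B) (TBmap_inj x hB)
    (by rw [Module.finrank_pi, Module.finrank_pi, Fintype.card_fin, Fintype.card_coe,
          card_of_basis x hB])

/-- the vertex map: `θ_B(λ)` solves `x_b ⬝ θ = λ_b` for `b ∈ B` -/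
def thetaB {B : Finset (Fin N)} (hB : IsBasisSet x B) : (Fin N → ℝ) →ₗ[ℝ] (Fin n → ℝ) :=
  (TBequiv x hB).symm.toLinearMap.comp (LinearMap.pi fun b : {i // i ∈ B} => LinearMap.proj b.1)

lemma thetaB_prop {B : Finset (Fin N)} (hB : IsBasisSet x B) (lam : Fin N → ℝ)
    {b : Fin N} (hb : b ∈ B) : dotp (x b) (thetaB x hB lam) = lam b := by
  have h : TBmap x B (thetaB x hB lam) = fun b : {i // i ∈ B} => lam b.1 := by
    show TBequiv x hB (thetaB x hB lam) = _
    rw [thetaB]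
    simp only [LinearMap.comp_apply, LinearEquiv.coe_toLinearMap]
    rw [LinearEquiv.apply_symm_apply]
    rfl
  have := congrFun h ⟨b, hb⟩
  exact this

lemma thetaB_single_ne {B B' : Finset (Fin N)} (hB : IsBasisSet x B) (hB' : IsBasisSet x B')
    {b : Fin N} (hbB : b ∈ B) (hbB' : b ∉ B') :
    thetaB x hB (Pi.single b 1) ≠ thetaB x hB' (Pi.single b 1) := by
  have h1 : dotp (x b) (thetaB x hB (Pi.single b 1)) = 1 := by
    rw [thetaB_prop x hB _ hbB, Pi.single_eq_same]
  have h2 : thetaB x hB' (Pi.single b 1) = 0 := by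
    rw [thetaB]
    simp only [LinearMap.comp_apply, LinearEquiv.coe_toLinearMap]
    have : (LinearMap.pi fun b'' : {i // i ∈ B'} => (LinearMap.proj b''.1 :
        (Fin N → ℝ) →ₗ[ℝ] ℝ)) (Pi.single b 1) = 0 := by
      funext b''
      simp only [LinearMap.pi_apply, LinearMap.proj_apply, Pi.zero_apply]
      exact Pi.single_eq_of_ne (fun h => hbB' (by rw [← h]; exact b''.2)) 1
    rw [this, map_zero]
  intro hcon
  rw [hcon, h2] at h1
  simp [dotp] at h1

lemma thetaB_ne {B B' : Finset (Fin N)} (hB : IsBasisSet x B) (hB' : IsBasisSet x B')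
    (hne : B ≠ B') : ∃ lam, thetaB x hB lam ≠ thetaB x hB' lam := by
  have : (∃ b, b ∈ B ∧ b ∉ B') ∨ (∃ b, b ∈ B' ∧ b ∉ B) := by
    by_contra hcon
    push_neg at hcon
    apply hne
    ext b
    exact ⟨fun h => hcon.1 b h, fun h => hcon.2 b h⟩
  rcases this with ⟨b, hbB, hbB'⟩ | ⟨b, hbB', hbB⟩
  · exact ⟨Pi.single b 1, thetaB_single_ne x hB hB' hbB hbB'⟩
  · exact ⟨Pi.single b 1, fun h => thetaB_single_ne x hB' hB hbB' hbB h.symm⟩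

/-- existence of a generic λ separating all vertices -/
lemma exists_generic_lam :
    ∃ lam : Fin N → ℝ, ∀ B B' (hB : IsBasisSet x B) (hB' : IsBasisSet x B'), B ≠ B' →
      thetaB x hB lam ≠ thetaB x hB' lam := by
  classical
  have hfun : ∀ p : Finset (Fin N) × Finset (Fin N),
      ∃ g : (Fin N → ℝ) →ₗ[ℝ] ℝ,
        ∀ (hB : IsBasisSet x p.1) (hB' : IsBasisSet x p.2), p.1 ≠ p.2 →
          g ≠ 0 ∧ ∀ lam, g lam ≠ 0 → thetaB x hB lam ≠ thetaB x hB' lam := by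
    intro p
    by_cases hp : IsBasisSet x p.1 ∧ IsBasisSet x p.2 ∧ p.1 ≠ p.2
    · obtain ⟨hB0, hB0', hne0⟩ := hp
      obtain ⟨μ, hμ⟩ := thetaB_ne x hB0 hB0' hne0
      have : ∃ c, thetaB x hB0 μ c ≠ thetaB x hB0' μ c := by
        by_contra hcon
        push_neg at hcon
        exact hμ (funext hcon)
      obtain ⟨c, hc⟩ := this
      refine ⟨(LinearMap.proj c).comp ((thetaB x hB0) - (thetaB x hB0')), ?_⟩
      intro hB1 hB1' hne1
      constructor
      · intro h0
        have := congrFun (congrArg DFunLike.coe h0) μ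
        simp only [LinearMap.comp_apply, LinearMap.sub_apply, LinearMap.proj_apply,
          LinearMap.zero_apply, Pi.sub_apply] at this
        exact hc (sub_eq_zero.mp this)
      · intro lam hg heq
        apply hg
        simp only [LinearMap.comp_apply, LinearMap.sub_apply, LinearMap.proj_apply, Pi.sub_apply]
        have heq' : thetaB x hB0 lam = thetaB x hB0' lam := heq
        rw [heq', sub_self]
    · exact ⟨0, fun hB hB' hne => absurd ⟨hB, hB', hne⟩ hp⟩
  choose g hg using hfun
  set Pairs : Finset (Finset (Fin N) × Finset (Fin N)) :=
    Finset.univ.filter (fun p => IsBasisSet x p.1 ∧ IsBasisSet x p.2 ∧ p.1 ≠ p.2) with hPairs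
  let e : Fin N → (Fin N → ℝ) := fun i j => if i = j then 1 else 0
  let q : Finset (Fin N) × Finset (Fin N) → MvPolynomial (Fin N) ℝ := fun p =>
    ∑ i, MvPolynomial.C (g p (e i)) * MvPolynomial.X i
  have heval : ∀ p lam, MvPolynomial.eval lam (q p) = g p lam := by
    intro p lam
    have h1 : MvPolynomial.eval lam (q p) = ∑ i, g p (e i) * lam i := by
      simp [q]
    rw [h1]
    conv_rhs => rw [pi_eq_sum_univ lam, map_sum]
    apply Finset.sum_congr rfl
    intro i _
    rw [map_smul]
    simp [e, smul_eq_mul, mul_comm]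
  have hq0 : ∀ p ∈ Pairs, q p ≠ 0 := by
    intro p hp hq
    rw [hPairs, Finset.mem_filter] at hp
    obtain ⟨-, hB, hB', hne⟩ := hp
    apply (hg p hB hB' hne).1
    apply LinearMap.ext
    intro lam
    rw [← heval p lam, hq, map_zero, LinearMap.zero_apply]
  have hQ : (∏ p ∈ Pairs, q p) ≠ 0 := Finset.prod_ne_zero_iff.mpr hq0
  have hex : ∃ lam, MvPolynomial.eval lam (∏ p ∈ Pairs, q p) ≠ 0 := by
    by_contra hcon
    push_neg at hcon
    exact hQ (MvPolynomial.funext (q := 0) (by simp [hcon]))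
  obtain ⟨lam, hlam⟩ := hex
  refine ⟨lam, ?_⟩
  intro B B' hB hB' hne
  have hmem : (B, B') ∈ Pairs := by
    rw [hPairs, Finset.mem_filter]
    exact ⟨Finset.mem_univ _, hB, hB', hne⟩
  have hk : MvPolynomial.eval lam (q (B, B')) ≠ 0 := by
    rw [map_prod] at hlam
    exact Finset.prod_ne_zero_iff.mp hlam _ hmem
  rw [heval] at hk
  exact (hg (B, B') hB hB' hne).2 lam hk

/-- the deformed product -/
def pLam (lam : Fin N → ℝ) (Y : Finset (Fin N)) : MvPolynomial (Fin n) ℂ :=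
  ∏ i ∈ Y, (lin n (x i) - MvPolynomial.C (lam i : ℂ))

def JlamSet (lam : Fin N → ℝ) : Set (MvPolynomial (Fin n) ℂ) :=
  {p | ∃ Y : Finset (Fin N),
    Module.finrank ℝ (Submodule.span ℝ (x '' ↑((Finset.univ : Finset (Fin N)) \ Y))) ≠ n ∧
    p = pLam x lam Y}

lemma pLam_deg (lam : Fin N → ℝ) (Y : Finset (Fin N)) :
    (pLam x lam Y).totalDegree ≤ Y.card := by
  refine le_trans (MvPolynomial.totalDegree_finset_prod Y _) ?_
  rw [Finset.card_eq_sum_ones Y]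
  apply Finset.sum_le_sum
  intro i _
  rw [sub_eq_add_neg]
  refine le_trans (MvPolynomial.totalDegree_add _ _) ?_
  simp only [sup_le_iff]
  exact ⟨lin_deg (x i), by rw [MvPolynomial.totalDegree_neg, MvPolynomial.totalDegree_C]; omega⟩

lemma comp_pLam_top (lam : Fin N → ℝ) (Y : Finset (Fin N)) :
    MvPolynomial.homogeneousComponent Y.card (pLam x lam Y) = pProd x Y := by
  classical
  induction Y using Finset.induction_on with
  | empty =>
      rw [pLam, pProd, Finset.prod_empty, Finset.prod_empty, Finset.card_empty]
      rw [MvPolynomial.homogeneousComponent_of_mem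
        ((MvPolynomial.mem_homogeneousSubmodule _ _).mpr (MvPolynomial.isHomogeneous_one _ _))]
      simp
  | insert i Y hi ih =>
      have hexp : pLam x lam (insert i Y) =
          lin n (x i) * pLam x lam Y - MvPolynomial.C (lam i : ℂ) * pLam x lam Y := by
        rw [pLam, Finset.prod_insert hi, sub_mul]
        rfl
      rw [hexp, Finset.card_insert_of_notMem hi, map_sub]
      have h1 : MvPolynomial.homogeneousComponent (Y.card + 1)
          (lin n (x i) * pLam x lam Y) = lin n (x i) * pProd x Y := by
        have := comp_mul_left_homog (lin n (x i)) (pLam x lam Y) 1 Y.card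
          (lin_homog (x i)) (pLam_deg x lam Y)
        rw [add_comm] at this
        rw [this, ih]
      have h2 : MvPolynomial.homogeneousComponent (Y.card + 1)
          (MvPolynomial.C (lam i : ℂ) * pLam x lam Y) = 0 := by
        apply MvPolynomial.homogeneousComponent_eq_zero
        have hd : (MvPolynomial.C (lam i : ℂ) * pLam x lam Y).totalDegree ≤ Y.card := by
          refine le_trans (MvPolynomial.totalDegree_mul _ _) ?_
          rw [MvPolynomial.totalDegree_C, zero_add]
          exact pLam_deg x lam Y
        omega
      rw [h1, h2, sub_zero, ← pProd_insert x hi]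

end ZPC
section ZPE
variable {n N : ℕ} (x : Fin N → Fin n → ℝ) (lam : Fin N → ℝ)

/-- Every element of `J` is, in each degree `j`, the `j`-th component of an
element of `J_λ` of total degree ≤ j. -/
lemma claimD (f : MvPolynomial (Fin n) ℂ) (hf : f ∈ Ideal.span (JsetS x)) (j : ℕ) :
    ∃ g ∈ Ideal.span (JlamSet x lam), g.totalDegree ≤ j ∧
      MvPolynomial.homogeneousComponent j g = MvPolynomial.homogeneousComponent j f := by
  classical
  have hf' : f ∈ Submodule.span (MvPolynomial (Fin n) ℂ) (JsetS x) := hf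
  rw [Submodule.mem_span_set'] at hf'
  obtain ⟨k, c, gens, hsum⟩ := hf'
  have hYs : ∀ i : Fin k, ∃ Y : Finset (Fin N),
      Module.finrank ℝ (Submodule.span ℝ
        (x '' ↑((Finset.univ : Finset (Fin N)) \ Y))) ≠ n ∧
      (gens i : MvPolynomial (Fin n) ℂ) = pProd x Y := fun i => (gens i).2
  choose Ys hlong hPY using hYs
  refine ⟨∑ i : Fin k, if (Ys i).card ≤ j then
      (MvPolynomial.homogeneousComponent (j - (Ys i).card) (c i)) * pLam x lam (Ys i)
      else 0, ?_, ?_, ?_⟩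
  · apply Ideal.sum_mem
    intro i _
    split
    · exact Ideal.mul_mem_left _ _ (Ideal.subset_span ⟨Ys i, hlong i, rfl⟩)
    · exact Ideal.zero_mem _
  · refine le_trans (MvPolynomial.totalDegree_finset_sum _ _) ?_
    apply Finset.sup_le
    intro i _
    split
    next h =>
      refine le_trans (MvPolynomial.totalDegree_mul _ _) ?_
      have h1 := (MvPolynomial.homogeneousComponent_isHomogeneous
        (j - (Ys i).card) (c i)).totalDegree_le
      have h2 := pLam_deg x lam (Ys i)
      omega
    next => simp
  · rw [map_sum, ← hsum, map_sum]
    apply Finset.sum_congr rfl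
    intro i _
    have hsm : (c i • (gens i : MvPolynomial (Fin n) ℂ)) = c i * pProd x (Ys i) := by
      rw [smul_eq_mul, hPY i]
    rw [hsm]
    by_cases h : (Ys i).card ≤ j
    · rw [if_pos h]
      rw [comp_homog_mul (c i) _ _ j (pProd_homog x (Ys i)), if_pos h]
      have := comp_mul_left_homog (MvPolynomial.homogeneousComponent (j - (Ys i).card) (c i))
        (pLam x lam (Ys i)) (j - (Ys i).card) (Ys i).card
        (MvPolynomial.homogeneousComponent_isHomogeneous _ _) (pLam_deg x lam (Ys i))
      rw [Nat.sub_add_cancel h] at this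
      rw [this, comp_pLam_top]
    · rw [if_neg h, map_zero]
      rw [comp_homog_mul (c i) _ _ j (pProd_homog x (Ys i)), if_neg h]

/-- degree-truncation submodule -/
abbrev TT (n j : ℕ) : Submodule ℂ (MvPolynomial (Fin n) ℂ) :=
  MvPolynomial.restrictTotalDegree (Fin n) ℂ j

lemma comp_zero_of_mem_T0 {f : MvPolynomial (Fin n) ℂ} (hf : f ∈ TT n 0) :
    MvPolynomial.homogeneousComponent 0 f = f := by
  rw [MvPolynomial.mem_restrictTotalDegree] at hf
  have hdeg : f.totalDegree = 0 := Nat.le_zero.mp hf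
  conv_rhs => rw [← MvPolynomial.sum_homogeneousComponent f]
  rw [hdeg, Finset.range_one, Finset.sum_singleton]

lemma mem_T_pred {j : ℕ} (hj : 1 ≤ j) {f : MvPolynomial (Fin n) ℂ} (hf : f ∈ TT n j)
    (h0 : MvPolynomial.homogeneousComponent j f = 0) : f ∈ TT n (j - 1) := by
  rw [MvPolynomial.mem_restrictTotalDegree] at hf ⊢
  rw [MvPolynomial.totalDegree]
  apply Finset.sup_le
  intro m hm
  have hle : (m.sum fun _ e => e) ≤ j := by
    refine le_trans ?_ hf
    exact Finset.le_sup (f := fun s => s.sum fun _ e => e) hm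
  have hne : (m.sum fun _ e => e) ≠ j := by
    intro heq
    have hc : MvPolynomial.coeff m (MvPolynomial.homogeneousComponent j f) =
        MvPolynomial.coeff m f := by
      rw [MvPolynomial.coeff_homogeneousComponent]
      rw [if_pos]
      show m.degree = j
      rw [← heq]
      rfl
    rw [h0] at hc
    simp only [MvPolynomial.coeff_zero] at hc
    exact (MvPolynomial.mem_support_iff.mp hm) hc.symm
  omega

lemma rank_step (K : Submodule ℂ (MvPolynomial (Fin n) ℂ)) (j : ℕ) (hj : 1 ≤ j) :
    Module.finrank ℂ (K ⊓ TT n j : Submodule ℂ (MvPolynomial (Fin n) ℂ)) =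
      Module.finrank ℂ (K ⊓ TT n (j - 1) : Submodule ℂ (MvPolynomial (Fin n) ℂ)) +
      Module.finrank ℂ (Submodule.map (MvPolynomial.homogeneousComponent j)
        (K ⊓ TT n j)) := by
  classical
  haveI : FiniteDimensional ℂ (K ⊓ TT n j : Submodule ℂ (MvPolynomial (Fin n) ℂ)) :=
    Submodule.finiteDimensional_of_le inf_le_right
  set φ : (K ⊓ TT n j : Submodule ℂ (MvPolynomial (Fin n) ℂ)) →ₗ[ℂ]
      MvPolynomial (Fin n) ℂ :=
    (MvPolynomial.homogeneousComponent j).comp (K ⊓ TT n j).subtype with hφ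
  have hrange : LinearMap.range φ =
      Submodule.map (MvPolynomial.homogeneousComponent j) (K ⊓ TT n j) := by
    rw [hφ, LinearMap.range_comp, Submodule.range_subtype]
  have hker : LinearMap.ker φ =
      Submodule.comap (K ⊓ TT n j).subtype (K ⊓ TT n (j - 1)) := by
    ext f
    simp only [LinearMap.mem_ker, hφ, LinearMap.comp_apply, Submodule.subtype_apply,
      Submodule.mem_comap, Submodule.mem_inf]
    constructor
    · intro h0
      exact ⟨f.2.1, mem_T_pred hj f.2.2 h0⟩
    · intro hmem
      apply MvPolynomial.homogeneousComponent_eq_zero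
      have := (MvPolynomial.mem_restrictTotalDegree _ _ _).mp hmem.2
      omega
  have hle : K ⊓ TT n (j - 1) ≤ K ⊓ TT n j := by
    apply inf_le_inf_left
    intro f hf
    rw [MvPolynomial.mem_restrictTotalDegree] at hf ⊢
    omega
  have hkerrank : Module.finrank ℂ (LinearMap.ker φ) =
      Module.finrank ℂ (K ⊓ TT n (j - 1) : Submodule ℂ (MvPolynomial (Fin n) ℂ)) := by
    rw [hker]
    exact LinearEquiv.finrank_eq (Submodule.comapSubtypeEquivOfLe hle)
  have := LinearMap.finrank_range_add_finrank_ker φ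
  rw [hrange, hkerrank] at this
  omega

lemma rank_zero (K : Submodule ℂ (MvPolynomial (Fin n) ℂ)) :
    Module.finrank ℂ (K ⊓ TT n 0 : Submodule ℂ (MvPolynomial (Fin n) ℂ)) =
      Module.finrank ℂ (Submodule.map (MvPolynomial.homogeneousComponent 0)
        (K ⊓ TT n 0)) := by
  classical
  haveI : FiniteDimensional ℂ (K ⊓ TT n 0 : Submodule ℂ (MvPolynomial (Fin n) ℂ)) :=
    Submodule.finiteDimensional_of_le inf_le_right
  set φ : (K ⊓ TT n 0 : Submodule ℂ (MvPolynomial (Fin n) ℂ)) →ₗ[ℂ]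
      MvPolynomial (Fin n) ℂ :=
    (MvPolynomial.homogeneousComponent 0).comp (K ⊓ TT n 0).subtype with hφ
  have hrange : LinearMap.range φ =
      Submodule.map (MvPolynomial.homogeneousComponent 0) (K ⊓ TT n 0) := by
    rw [hφ, LinearMap.range_comp, Submodule.range_subtype]
  have hker : LinearMap.ker φ = ⊥ := by
    rw [eq_bot_iff]
    intro f hf
    simp only [LinearMap.mem_ker, hφ, LinearMap.comp_apply, Submodule.subtype_apply] at hf
    rw [comp_zero_of_mem_T0 f.2.2] at hf
    simp only [Submodule.mem_bot]
    exact Subtype.ext hf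
  have := LinearMap.finrank_range_add_finrank_ker φ
  rw [hrange, hker, finrank_bot, add_zero] at this
  omega

lemma finrank_filtration_le (K1 K2 : Submodule ℂ (MvPolynomial (Fin n) ℂ))
    (h : ∀ j, Submodule.map (MvPolynomial.homogeneousComponent j) (K1 ⊓ TT n j) ≤
      Submodule.map (MvPolynomial.homogeneousComponent j) (K2 ⊓ TT n j)) :
    ∀ d, Module.finrank ℂ (K1 ⊓ TT n d : Submodule ℂ (MvPolynomial (Fin n) ℂ)) ≤
      Module.finrank ℂ (K2 ⊓ TT n d : Submodule ℂ (MvPolynomial (Fin n) ℂ)) := by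
  have hmaprank : ∀ j, Module.finrank ℂ
      (Submodule.map (MvPolynomial.homogeneousComponent j) (K1 ⊓ TT n j)) ≤
      Module.finrank ℂ (Submodule.map (MvPolynomial.homogeneousComponent j) (K2 ⊓ TT n j)) := by
    intro j
    haveI : FiniteDimensional ℂ (K2 ⊓ TT n j : Submodule ℂ (MvPolynomial (Fin n) ℂ)) :=
      Submodule.finiteDimensional_of_le inf_le_right
    haveI := Module.Finite.map (K2 ⊓ TT n j) (MvPolynomial.homogeneousComponent j (R := ℂ)
      (σ := Fin n))
    exact Submodule.finrank_mono (h j)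
  intro d
  induction d with
  | zero => rw [rank_zero, rank_zero]; exact hmaprank 0
  | succ d ih =>
      rw [rank_step K1 (d+1) (by omega), rank_step K2 (d+1) (by omega)]
      simp only [Nat.succ_sub_one]
      exact Nat.add_le_add ih (hmaprank (d+1))

lemma J_rank_le_Jlam_rank (d : ℕ) :
    Module.finrank ℂ ((Ideal.span (JsetS x)).restrictScalars ℂ ⊓ TT n d :
      Submodule ℂ (MvPolynomial (Fin n) ℂ)) ≤
    Module.finrank ℂ ((Ideal.span (JlamSet x lam)).restrictScalars ℂ ⊓ TT n d :
      Submodule ℂ (MvPolynomial (Fin n) ℂ)) := by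
  apply finrank_filtration_le
  intro j
  rintro _ ⟨f, ⟨hfJ, hfT⟩, rfl⟩
  obtain ⟨g, hgJ, hgdeg, hgcomp⟩ := claimD x lam f hfJ j
  exact ⟨g, ⟨hgJ, (MvPolynomial.mem_restrictTotalDegree _ _ _).mpr hgdeg⟩, hgcomp⟩

end ZPE
section ZPF
variable {n N : ℕ} (x : Fin N → Fin n → ℝ)

lemma eval_lin (θ : Fin n → ℝ) (v : Fin n → ℝ) :
    MvPolynomial.eval (fun i => (θ i : ℂ)) (lin n v) = ((dotp v θ : ℝ) : ℂ) := by
  rw [lin, dotp, map_sum]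
  push_cast
  apply Finset.sum_congr rfl
  intro i _
  simp

lemma P_le_TT : centralPOn x (Finset.univ : Finset (Fin N)) ≤ TT n N := by
  rw [centralPOn, Submodule.span_le]
  rintro _ ⟨Y, -, -, rfl⟩
  rw [SetLike.mem_coe, MvPolynomial.mem_restrictTotalDegree]
  refine le_trans (pProd_deg x Y) ?_
  have := Finset.card_le_univ Y
  simpa using this

lemma Jlam_vanish (lam : Fin N → ℝ) {B : Finset (Fin N)} (hB : IsBasisSet x B)
    {g : MvPolynomial (Fin n) ℂ} (hg : g ∈ Ideal.span (JlamSet x lam)) :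
    MvPolynomial.eval (fun i => ((thetaB x hB lam i : ℝ) : ℂ)) g = 0 := by
  have hle : Ideal.span (JlamSet x lam) ≤
      RingHom.ker (MvPolynomial.eval (fun i => ((thetaB x hB lam i : ℝ) : ℂ))) := by
    rw [Ideal.span_le]
    rintro _ ⟨Y, hlong, rfl⟩
    rw [SetLike.mem_coe, RingHom.mem_ker]
    have hBY : ∃ b, b ∈ B ∧ b ∈ Y := by
      by_contra hcon
      push_neg at hcon
      have hsub : (↑B : Set (Fin N)) ⊆ ↑((Finset.univ : Finset (Fin N)) \ Y) := by
        intro b hb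
        simp only [Finset.coe_sdiff, Finset.coe_univ, Set.mem_diff, Set.mem_univ, true_and,
          Finset.mem_coe]
        exact hcon b hb
      have hspan : Submodule.span ℝ (x '' ↑B) ≤
          Submodule.span ℝ (x '' ↑((Finset.univ : Finset (Fin N)) \ Y)) :=
        Submodule.span_mono (Set.image_mono hsub)
      rw [hB.2] at hspan
      have htop : Submodule.span ℝ (x '' ↑((Finset.univ : Finset (Fin N)) \ Y)) = ⊤ :=
        eq_top_iff.mpr hspan
      apply hlong
      rw [htop, finrank_top, Module.finrank_pi, Fintype.card_fin]
    obtain ⟨b, hbB, hbY⟩ := hBY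
    rw [pLam, map_prod]
    apply Finset.prod_eq_zero hbY
    rw [map_sub, eval_lin, MvPolynomial.eval_C, thetaB_prop x hB lam hbB, sub_self]
  exact RingHom.mem_ker.mp (hle hg)

end ZPF

theorem central_decomposition' (n N : ℕ) (x : Fin N → Fin n → ℝ)
    (hx0 : ∀ i, x i ≠ 0) (hx : Submodule.span ℝ (Set.range x) = ⊤) :
    IsCompl (centralPOn x (Finset.univ : Finset (Fin N)))
      ((Ideal.span {p | ∃ Y : Finset (Fin N),
          Module.finrank ℝ (Submodule.span ℝ (x '' ↑((Finset.univ : Finset (Fin N)) \ Y))) ≠ n ∧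
          p = pProd x Y}).restrictScalars ℂ) := by
  classical
  show IsCompl (centralPOn x (Finset.univ : Finset (Fin N)))
      ((Ideal.span (JsetS x)).restrictScalars ℂ)
  set P := centralPOn x (Finset.univ : Finset (Fin N)) with hPdef
  set J := (Ideal.span (JsetS x)).restrictScalars ℂ with hJdef
  rw [isCompl_iff]
  constructor
  · -- disjointness
    obtain ⟨lam, hgen⟩ := exists_generic_lam x
    set Jlam := (Ideal.span (JlamSet x lam)).restrictScalars ℂ with hJlamdef
    set BasF : Finset (Finset (Fin N)) :=
      Finset.univ.filter (fun B => IsBasisSet x B) with hBasF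
    set K := BasF.card with hK
    set d := N + K with hd
    have hBmem : ∀ B : ↑BasF, IsBasisSet x ↑B := by
      intro B
      exact (Finset.mem_filter.mp B.2).2
    -- vertices
    set thetaR : ↑BasF → (Fin n → ℝ) := fun B => thetaB x (hBmem B) lam with hthetaR
    set thetaC : ↑BasF → (Fin n → ℂ) := fun B => fun i => ((thetaR B i : ℝ) : ℂ) with hthetaC
    have hdist : ∀ B B' : ↑BasF, B ≠ B' → thetaR B ≠ thetaR B' := by
      intro B B' hne
      exact hgen ↑B ↑B' (hBmem B) (hBmem B') (fun h => hne (Subtype.ext h))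
    have hsep : ∀ B B' : ↑BasF, B ≠ B' → ∃ k, thetaR B k ≠ thetaR B' k := by
      intro B B' hne
      by_contra hcon
      push_neg at hcon
      exact hdist B B' hne (funext hcon)
    choose sepk hsepk using hsep
    -- interpolants
    set qB : ↑BasF → MvPolynomial (Fin n) ℂ := fun B =>
      ∏ p ∈ (Finset.univ.erase B).attach,
        (MvPolynomial.X (sepk B p.1 (Finset.ne_of_mem_erase p.2).symm) -
         MvPolynomial.C ((thetaR p.1 (sepk B p.1 (Finset.ne_of_mem_erase p.2).symm) : ℝ) : ℂ))
      with hqB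
    have heval0 : ∀ B B'' : ↑BasF, B'' ≠ B →
        MvPolynomial.eval (thetaC B'') (qB B) = 0 := by
      intro B B'' hne
      rw [hqB, map_prod]
      have hmem : (⟨B'', Finset.mem_erase_of_ne_of_mem hne (Finset.mem_univ _)⟩ :
          {p // p ∈ Finset.univ.erase B}) ∈ (Finset.univ.erase B).attach :=
        Finset.mem_attach _ _
      apply Finset.prod_eq_zero hmem
      rw [map_sub, MvPolynomial.eval_X, MvPolynomial.eval_C]
      rw [hthetaC]
      simp
    have hevalB : ∀ B : ↑BasF, MvPolynomial.eval (thetaC B) (qB B) ≠ 0 := by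
      intro B
      rw [hqB, map_prod]
      rw [Finset.prod_ne_zero_iff]
      intro p _
      rw [map_sub, MvPolynomial.eval_X, MvPolynomial.eval_C]
      rw [sub_ne_zero, hthetaC]
      intro hcon
      have hR : thetaR B (sepk B p.1 (Finset.ne_of_mem_erase p.2).symm) =
          thetaR p.1 (sepk B p.1 (Finset.ne_of_mem_erase p.2).symm) :=
        Complex.ofReal_inj.mp hcon
      exact hsepk B p.1 (Finset.ne_of_mem_erase p.2).symm hR
    have hqBT : ∀ B : ↑BasF, qB B ∈ TT n d := by
      intro B
      rw [MvPolynomial.mem_restrictTotalDegree, hqB]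
      refine le_trans (MvPolynomial.totalDegree_finset_prod _ _) ?_
      have h1 : ∀ p ∈ (Finset.univ.erase B).attach,
          (MvPolynomial.X (sepk B p.1 (Finset.ne_of_mem_erase p.2).symm) -
           MvPolynomial.C ((thetaR p.1 (sepk B p.1 (Finset.ne_of_mem_erase p.2).symm) : ℝ) : ℂ)
           : MvPolynomial (Fin n) ℂ).totalDegree ≤ 1 := by
        intro p _
        rw [sub_eq_add_neg]
        refine le_trans (MvPolynomial.totalDegree_add _ _) ?_
        simp only [sup_le_iff]
        constructor
        · rw [MvPolynomial.totalDegree_X]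
        · rw [MvPolynomial.totalDegree_neg, MvPolynomial.totalDegree_C]; omega
      refine le_trans (Finset.sum_le_sum h1) ?_
      rw [Finset.sum_const, smul_eq_mul, mul_one, Finset.card_attach]
      have h2 : (Finset.univ.erase B).card ≤ (Finset.univ : Finset ↑BasF).card :=
        Finset.card_le_card (Finset.erase_subset _ _)
      rw [Finset.card_univ, Fintype.card_coe] at h2
      omega
    -- key independence property
    have hkey : ∀ a : ↑BasF → ℂ,
        (∑ B, a B • qB B) ∈ Ideal.span (JlamSet x lam) → ∀ B, a B = 0 := by
      intro a ha B
      have hv := Jlam_vanish x lam (hBmem B) ha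
      rw [map_sum] at hv
      have hsum : ∀ B'' ∈ Finset.univ, B'' ≠ B →
          MvPolynomial.eval (fun i => ((thetaB x (hBmem B) lam i : ℝ) : ℂ)) (a B'' • qB B'')
          = 0 := by
        intro B'' _ hne
        rw [MvPolynomial.smul_eval]
        have : MvPolynomial.eval (thetaC B) (qB B'') = 0 := heval0 B'' B hne.symm
        rw [hthetaC, hthetaR] at this
        rw [this, mul_zero]
      rw [Finset.sum_eq_single B hsum (fun h => absurd (Finset.mem_univ B) h)] at hv
      rw [MvPolynomial.smul_eval] at hv
      rcases mul_eq_zero.mp hv with h | h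
      · exact h
      · exfalso
        apply hevalB B
        rw [hthetaC, hthetaR]
        exact h
    -- the span of interpolants
    have hqind : LinearIndependent ℂ qB := by
      rw [Fintype.linearIndependent_iff]
      intro g hg
      exact hkey g (by rw [hg]; exact Ideal.zero_mem _)
    set U := Submodule.span ℂ (Set.range qB) with hU
    haveI : FiniteDimensional ℂ U := FiniteDimensional.span_of_finite ℂ (Set.finite_range qB)
    have hUrank : Module.finrank ℂ U = K := by
      rw [hU, finrank_span_eq_card hqind, Fintype.card_coe]
    have hUdisj : U ⊓ (Jlam ⊓ TT n d) = ⊥ := by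
      rw [eq_bot_iff]
      rintro f ⟨hfU, hfJ, -⟩
      rw [hU, SetLike.mem_coe, Submodule.mem_span_range_iff_exists_fun] at hfU
      obtain ⟨a, rfl⟩ := hfU
      have := hkey a hfJ
      simp only [Submodule.mem_bot]
      rw [Finset.sum_congr rfl (fun B _ => by rw [this B, zero_smul])]
      simp
    have hUle : U ≤ TT n d := by
      rw [hU, Submodule.span_le]
      rintro _ ⟨B, rfl⟩
      exact hqBT B
    haveI : FiniteDimensional ℂ (Jlam ⊓ TT n d : Submodule ℂ (MvPolynomial (Fin n) ℂ)) :=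
      Submodule.finiteDimensional_of_le inf_le_right
    have hlow : K + Module.finrank ℂ (Jlam ⊓ TT n d :
        Submodule ℂ (MvPolynomial (Fin n) ℂ)) ≤ Module.finrank ℂ (TT n d) := by
      have hsum := Submodule.finrank_sup_add_finrank_inf_eq U (Jlam ⊓ TT n d)
      rw [hUdisj, finrank_bot, add_zero, hUrank] at hsum
      rw [← hsum]
      haveI : FiniteDimensional ℂ (U ⊔ (Jlam ⊓ TT n d) :
          Submodule ℂ (MvPolynomial (Fin n) ℂ)) :=
        Submodule.finiteDimensional_of_le (sup_le hUle inf_le_right)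
      exact Submodule.finrank_mono (sup_le hUle inf_le_right)
    -- upper bound for P
    have hPrank : Module.finrank ℂ P ≤ K := by
      have hle1 : P ≤ VB x := centralPOn_le_VB x
      have hVBeq : {p | ∃ B : Finset (Fin N), IsBasisSet x B ∧ p = pProd x (XofY x B)} =
          Set.range (fun B : ↑BasF => pProd x (XofY x ↑B)) := by
        ext p
        constructor
        · rintro ⟨B, hB, rfl⟩
          refine ⟨⟨B, ?_⟩, rfl⟩
          rw [hBasF, Finset.mem_filter]
          exact ⟨Finset.mem_univ _, hB⟩
        · rintro ⟨B, rfl⟩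
          exact ⟨↑B, hBmem B, rfl⟩
      have hVB : VB x = Submodule.span ℂ (Set.range (fun B : ↑BasF => pProd x (XofY x ↑B))) := by
        rw [VB, hVBeq]
      haveI : FiniteDimensional ℂ (VB x) := by
        rw [hVB]
        exact FiniteDimensional.span_of_finite ℂ (Set.finite_range _)
      refine le_trans (Submodule.finrank_mono hle1) ?_
      rw [hVB]
      refine le_trans (finrank_span_le_card _) ?_
      rw [Set.toFinset_range]
      refine le_trans (Finset.card_image_le) ?_
      rw [Finset.card_univ, Fintype.card_coe]
    -- assemble
    have hTTle : TT n N ≤ TT n d := by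
      intro f hf
      rw [MvPolynomial.mem_restrictTotalDegree] at hf ⊢
      exact le_trans hf (Nat.le_add_right N K)
    have hPle : P ≤ TT n d := le_trans (P_le_TT x) hTTle
    haveI : FiniteDimensional ℂ P := Submodule.finiteDimensional_of_le hPle
    haveI : FiniteDimensional ℂ (J ⊓ TT n d : Submodule ℂ (MvPolynomial (Fin n) ℂ)) :=
      Submodule.finiteDimensional_of_le inf_le_right
    have hsup2 : TT n d ≤ P ⊔ (J ⊓ TT n d) := by
      intro f hf
      have hftop : f ∈ P ⊔ J := by
        rw [show P ⊔ J = MM x from rfl, codisjoint_MM x hx]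
        trivial
      rw [Submodule.mem_sup] at hftop
      obtain ⟨p, hp, g, hg, rfl⟩ := hftop
      rw [Submodule.mem_sup]
      refine ⟨p, hp, g, ⟨hg, ?_⟩, rfl⟩
      have : g = (p + g) - p := by ring
      rw [this]
      exact Submodule.sub_mem _ hf (hPle hp)
    have hJle : Module.finrank ℂ (J ⊓ TT n d : Submodule ℂ (MvPolynomial (Fin n) ℂ)) ≤
        Module.finrank ℂ (Jlam ⊓ TT n d : Submodule ℂ (MvPolynomial (Fin n) ℂ)) :=
      J_rank_le_Jlam_rank x lam d
    have hfinal := Submodule.finrank_sup_add_finrank_inf_eq P (J ⊓ TT n d)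
    haveI : FiniteDimensional ℂ (P ⊔ (J ⊓ TT n d) :
        Submodule ℂ (MvPolynomial (Fin n) ℂ)) :=
      Submodule.finiteDimensional_of_le (sup_le hPle inf_le_right)
    have hTd : Module.finrank ℂ (TT n d) ≤
        Module.finrank ℂ (P ⊔ (J ⊓ TT n d) : Submodule ℂ (MvPolynomial (Fin n) ℂ)) :=
      Submodule.finrank_mono hsup2
    haveI : FiniteDimensional ℂ (P ⊓ (J ⊓ TT n d) :
        Submodule ℂ (MvPolynomial (Fin n) ℂ)) :=
      Submodule.finiteDimensional_of_le (le_trans inf_le_right inf_le_right)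
    have hinf0 : Module.finrank ℂ (P ⊓ (J ⊓ TT n d) :
        Submodule ℂ (MvPolynomial (Fin n) ℂ)) = 0 := by omega
    have hbot : P ⊓ (J ⊓ TT n d) = ⊥ := Submodule.finrank_eq_zero.mp hinf0
    rw [disjoint_iff, eq_bot_iff]
    intro f hf
    rw [← hbot]
    exact ⟨hf.1, hf.2, hPle hf.1⟩
  · -- codisjointness
    rw [codisjoint_iff]
    exact codisjoint_MM x hx

theorem central_decomposition (n N : ℕ) (x : Fin N → Fin n → ℝ)
    (hx0 : ∀ i, x i ≠ 0) (hx : Submodule.span ℝ (Set.range x) = ⊤) :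
    IsCompl (centralPOn x (Finset.univ : Finset (Fin N)))
      ((Ideal.span {p | ∃ Y : Finset (Fin N),
          Module.finrank ℝ (Submodule.span ℝ (x '' ↑((Finset.univ : Finset (Fin N)) \ Y))) ≠ n ∧
          p = pProd x Y}).restrictScalars ℂ) :=
  central_decomposition' n N x hx0 hx
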